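/- Let 𝔉 be a saturated formation and G a finite group. Then the following three statements are equivalent: (i) G ∈ 𝔉; (ii) every chief factor of G is 𝔉-central in G; (iii) G has a normal 𝔉-hypercentral subgroup N such that G/N ∈ 𝔉. -/

import Mathlib

/-- A class of finite groups. -/
def GroupClass : Type 1 :=
  ∀ (G : Type) [Group G] [Finite G], Prop

instance SemidirectProduct.instFinite {N G : Type*} [Group N] [Group G] [Finite N] [Finite G]
    (φ : G →* MulAut N) : Finite (N ⋊[φ] G) :=
  Finite.of_injective (fun x => (x.left, x.right)) (by
    rintro ⟨a, b⟩ ⟨c, d⟩ h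
    simpa [Prod.ext_iff, SemidirectProduct.ext_iff] using h)

/-- The `F`-residual of a finite group `G`. -/
def GroupClass.residual (F : GroupClass) (G : Type) [Group G] [Finite G] : Subgroup G :=
  sInf {N : Subgroup G | ∃ _ : N.Normal, F (G ⧸ N)}

/-- `F` is a formation. -/
structure GroupClass.IsFormation (F : GroupClass) : Prop where
  nonempty : ∃ (G : Type) (_ : Group G) (_ : Finite G), F G
  isoClosed : ∀ (G H : Type) [Group G] [Finite G] [Group H] [Finite H],
    (G ≃* H) → F G → F H
  quot_residual_mem : ∀ (G : Type) [Group G] [Finite G] (N : Subgroup G) (_ : N.Normal),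
    F.residual G ≤ N → F (G ⧸ N)

/-- `F` is hereditary (subgroup-closed). -/
def GroupClass.Hereditary (F : GroupClass) : Prop :=
  ∀ (G : Type) [Group G] [Finite G], F G → ∀ H : Subgroup G, F H

/-- `F` is saturated. -/
def GroupClass.Saturated (F : GroupClass) : Prop :=
  ∀ (G : Type) [Group G] [Finite G], F.residual G ≤ frattini G → F G

section SectionMachinery

variable {G : Type} [Group G]

/-- conjugation by `g` preserves `S.subgroupOf R` when `R, S` are normal. -/
theorem conj_map_subgroupOf (R S : Subgroup G) [hR : R.Normal] [hS : S.Normal] (g : G) :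
    (S.subgroupOf R).map ((MulAut.conjNormal g : MulAut R) : R →* R) = S.subgroupOf R := by
  ext x
  simp only [Subgroup.mem_map, Subgroup.mem_subgroupOf]
  constructor
  · rintro ⟨y, hy, rfl⟩
    simpa [MulAut.conjNormal_apply] using hS.conj_mem _ hy g
  · intro hx
    refine ⟨(MulAut.conjNormal g).symm x, ?_, by simp⟩
    simp only [Subgroup.mem_subgroupOf, MulAut.conjNormal_symm_apply]
    simpa using hS.conj_mem _ hx g⁻¹

/-- The conjugation action of `G` on the normal section `R/S`. -/
def secAction (R S : Subgroup G) [R.Normal] [S.Normal] :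
    G →* MulAut (R ⧸ S.subgroupOf R) where
  toFun g := QuotientGroup.congr (S.subgroupOf R) (S.subgroupOf R)
      (MulAut.conjNormal g) (conj_map_subgroupOf R S g)
  map_one' := by
    ext x
    induction x using QuotientGroup.induction_on with
    | H r => simp [QuotientGroup.congr_mk]
  map_mul' g₁ g₂ := by
    ext x
    induction x using QuotientGroup.induction_on with
    | H r => simp [QuotientGroup.congr_mk, map_mul]

/-- The centraliser in `G` of the normal section `R/S`. -/
def secCentralizer (R S : Subgroup G) [R.Normal] [S.Normal] : Subgroup G :=
  (secAction R S).ker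

instance secCentralizer.normal (R S : Subgroup G) [R.Normal] [S.Normal] :
    (secCentralizer R S).Normal := MonoidHom.normal_ker _

/-- The semidirect product `[R/S](G/K)` for a normal subgroup `K ≤ C_G(R/S)`. -/
abbrev secSDP (R S K : Subgroup G) [R.Normal] [S.Normal] [K.Normal]
    (hK : K ≤ secCentralizer R S) : Type :=
  (R ⧸ S.subgroupOf R) ⋊[QuotientGroup.lift K (secAction R S) (fun _ hx => hK hx)] (G ⧸ K)

end SectionMachinery

/-- The normal section `R/S` of `G` is `F`-central in `G`. -/
def FCentralSection (F : GroupClass) {G : Type} [Group G] [Finite G]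
    (R S : Subgroup G) [R.Normal] [S.Normal] : Prop :=
  ∃ (K : Subgroup G) (hK : K.Normal),
    haveI := hK
    ∃ hle : K ≤ secCentralizer R S, F (secSDP R S K hle)

/-- `H/K` is a chief factor of `G`. -/
def IsChiefFactor {G : Type} [Group G] (H K : Subgroup G) : Prop :=
  H.Normal ∧ K.Normal ∧ K < H ∧
    ∀ L : Subgroup G, L.Normal → K ≤ L → L ≤ H → L = K ∨ L = H

/-- A normal subgroup `N` of `G` is `F`-hypercentral in `G`:
every chief factor of `G` below `N` is `F`-central in `G`. -/
def FHypercentralIn (F : GroupClass) {G : Type} [Group G] [Finite G] (N : Subgroup G) : Prop :=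
  N.Normal ∧ ∀ H K : Subgroup G, ∀ hcf : IsChiefFactor H K, H ≤ N →
    @FCentralSection F G _ _ H K hcf.1 hcf.2.1

/-- The `F`-hypercentre of `G`: the product of all `F`-hypercentral normal subgroups. -/
def FHypercentre (F : GroupClass) (G : Type) [Group G] [Finite G] : Subgroup G :=
  ⨆ (N : Subgroup G) (_ : FHypercentralIn F N), N

/-- `A` is `K`-`F`-subnormal in `G`. -/
def KFSubnormalIn (F : GroupClass) {G : Type} [Group G] [Finite G] (A : Subgroup G) : Prop :=
  ∃ (n : ℕ) (c : ℕ → Subgroup G), c 0 = A ∧ c n = ⊤ ∧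
    ∀ i < n, c i ≤ c (i + 1) ∧
      (((c i).subgroupOf (c (i + 1))).Normal ∨
        F ((c (i + 1)) ⧸ ((c i).subgroupOf (c (i + 1))).normalCore))

section Basics

variable (F : GroupClass)

theorem GroupClass.residual_normal (G : Type) [Group G] [Finite G] : (F.residual G).Normal := by
  constructor
  intro x hx g
  simp only [GroupClass.residual, Subgroup.mem_sInf] at hx ⊢
  rintro N hN
  obtain ⟨hNn, hq⟩ := hN
  exact hNn.conj_mem x (hx N ⟨hNn, hq⟩) g

theorem GroupClass.residual_le_of_quot_mem {G : Type} [Group G] [Finite G]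
    {N : Subgroup G} (hN : N.Normal) (h : F (G ⧸ N)) : F.residual G ≤ N :=
  sInf_le ⟨hN, h⟩

theorem GroupClass.mem_iff_residual_bot (hF : F.IsFormation) (G : Type) [Group G] [Finite G] :
    F G ↔ F.residual G = ⊥ := by
  constructor
  · intro h
    refine le_bot_iff.mp (sInf_le ⟨inferInstance, ?_⟩)
    exact hF.isoClosed G _ (QuotientGroup.quotientBot (G := G)).symm h
  · intro h
    exact hF.isoClosed _ G (QuotientGroup.quotientBot (G := G))
      (hF.quot_residual_mem G ⊥ inferInstance h.le)

theorem GroupClass.mem_of_surjective (hF : F.IsFormation) {G H : Type}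
    [Group G] [Finite G] [Group H] [Finite H] (f : G →* H)
    (hs : Function.Surjective f) (h : F G) : F H := by
  have h1 : F.residual G ≤ f.ker := by
    rw [(F.mem_iff_residual_bot hF G).mp h]
    exact bot_le
  have h2 : F (G ⧸ f.ker) := hF.quot_residual_mem G f.ker inferInstance h1
  exact hF.isoClosed _ _ (QuotientGroup.quotientKerEquivOfSurjective f hs) h2

theorem GroupClass.quot_mem (hF : F.IsFormation) {G : Type} [Group G] [Finite G]
    (N : Subgroup G) (hN : N.Normal) (h : F G) : F (G ⧸ N) := by
  have : F.residual G ≤ N := by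
    rw [(F.mem_iff_residual_bot hF G).mp h]; exact bot_le
  exact hF.quot_residual_mem G N hN this

end Basics
section SDPMap

variable {N₁ G₁ N₂ G₂ : Type} [Group N₁] [Group G₁] [Group N₂] [Group G₂]
  {φ₁ : G₁ →* MulAut N₁} {φ₂ : G₂ →* MulAut N₂}

/-- Map of semidirect products from compatible component homs. -/
def sdpMap (fN : N₁ →* N₂) (fG : G₁ →* G₂)
    (h : ∀ g n, fN (φ₁ g n) = φ₂ (fG g) (fN n)) :
    (N₁ ⋊[φ₁] G₁) →* (N₂ ⋊[φ₂] G₂) where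
  toFun x := ⟨fN x.left, fG x.right⟩
  map_one' := by
    ext <;> simp
  map_mul' x y := by
    ext <;> simp [h]

theorem sdpMap_surjective (fN : N₁ →* N₂) (fG : G₁ →* G₂)
    (h : ∀ g n, fN (φ₁ g n) = φ₂ (fG g) (fN n))
    (hN : Function.Surjective fN) (hG : Function.Surjective fG) :
    Function.Surjective (sdpMap fN fG h) := by
  rintro ⟨n, g⟩
  obtain ⟨n₀, rfl⟩ := hN n
  obtain ⟨g₀, rfl⟩ := hG g
  exact ⟨⟨n₀, g₀⟩, rfl⟩

end SDPMap

section SecCent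

variable {G : Type} [Group G]

theorem mem_secCentralizer_iff {R S : Subgroup G} [R.Normal] [S.Normal] {g : G} :
    g ∈ secCentralizer R S ↔ ∀ r ∈ R, g * r⁻¹ * g⁻¹ * r ∈ S := by
  constructor
  · intro h r hr
    have h1 : secAction R S g = 1 := h
    have h2 : secAction R S g ((⟨r, hr⟩ : R) : R ⧸ S.subgroupOf R) = ((⟨r, hr⟩ : R) : R ⧸ S.subgroupOf R) := by
      rw [h1]; rfl
    have h3 : ((MulAut.conjNormal g (⟨r, hr⟩ : R) : R) : R ⧸ S.subgroupOf R)
        = ((⟨r, hr⟩ : R) : R ⧸ S.subgroupOf R) := by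
      simpa [secAction, QuotientGroup.congr_mk] using h2
    have h4 := (QuotientGroup.eq (s := S.subgroupOf R)).mp h3
    have h5 : (MulAut.conjNormal g (⟨r, hr⟩ : R))⁻¹ * (⟨r, hr⟩ : R) ∈ S.subgroupOf R := h4
    rw [Subgroup.mem_subgroupOf] at h5
    simpa [mul_assoc] using h5
  · intro h
    show secAction R S g = 1
    ext x
    induction x using QuotientGroup.induction_on with
    | H r =>
      show secAction R S g (r : R ⧸ S.subgroupOf R) = _
      simp only [secAction, MonoidHom.coe_mk, OneHom.coe_mk, QuotientGroup.congr_mk]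
      show _ = ((r : ↥R) : R ⧸ S.subgroupOf R)
      rw [QuotientGroup.eq, Subgroup.mem_subgroupOf]
      simpa [mul_assoc] using h r r.2

theorem le_secCentralizer_self (R S : Subgroup G) [R.Normal] [hS : S.Normal] :
    S ≤ secCentralizer R S := by
  intro s hs
  rw [mem_secCentralizer_iff]
  intro r hr
  have h1 : s * r⁻¹ * s⁻¹ * r = s * (r⁻¹ * s⁻¹ * r⁻¹⁻¹) := by group
  rw [h1]
  exact S.mul_mem hs (hS.conj_mem s⁻¹ (S.inv_mem hs) r⁻¹)

end SecCent
section CentralOfMem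

theorem GroupClass.central_of_mem (F : GroupClass) (hF : F.IsFormation)
    {G : Type} [Group G] [Finite G]
    (hG : F G) (R S : Subgroup G) [hR : R.Normal] [hS : S.Normal] :
    FCentralSection F R S := by
  have hle : S ≤ secCentralizer R S := le_secCentralizer_self R S
  refine ⟨S, hS, hle, ?_⟩
  have hincl_le : S.subgroupOf R ≤ S.comap R.subtype := fun x hx => hx
  let incl : (R ⧸ S.subgroupOf R) →* (G ⧸ S) :=
    QuotientGroup.map (S.subgroupOf R) S R.subtype hincl_le
  have incl_mk : ∀ r : R, incl (r : R ⧸ S.subgroupOf R) = ((r : G) : G ⧸ S) := fun r => rfl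
  have incl_inj : Function.Injective incl := by
    rw [injective_iff_map_eq_one]
    intro x hx
    induction x using QuotientGroup.induction_on with
    | H r =>
      rw [incl_mk] at hx
      have h1 : (r : G) ∈ S := (QuotientGroup.eq_one_iff (r : G)).mp hx
      exact (QuotientGroup.eq_one_iff r).mpr (Subgroup.mem_subgroupOf.mpr h1)
  have hcond : ∀ g : G ⧸ S,
      incl.comp ((QuotientGroup.lift S (secAction R S) (fun _ hx => hle hx) g).toMonoidHom)
      = (MulAut.conj ((MonoidHom.id (G ⧸ S)) g)).toMonoidHom.comp incl := by
    intro g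
    induction g using QuotientGroup.induction_on with
    | H g =>
      refine MonoidHom.ext fun x => ?_
      induction x using QuotientGroup.induction_on with
      | H r =>
        show incl ((QuotientGroup.lift S (secAction R S) (fun _ hx => hle hx) (g : G ⧸ S))
          ((r : R ⧸ S.subgroupOf R))) = MulAut.conj ((g : G ⧸ S)) (incl (r : R ⧸ S.subgroupOf R))
        show incl (secAction R S g (r : R ⧸ S.subgroupOf R)) = _
        show incl (secAction R S g (r : R ⧸ S.subgroupOf R)) = _
        simp only [secAction, MonoidHom.coe_mk, OneHom.coe_mk, QuotientGroup.congr_mk]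
        rw [incl_mk, incl_mk]
        rw [MulAut.conj_apply]
        have : ((MulAut.conjNormal g r : R) : G) = g * (r : G) * g⁻¹ := by
          simp
        rw [this]
        rfl
  let π : secSDP R S S hle →* (G ⧸ S) :=
    SemidirectProduct.lift incl (MonoidHom.id _) hcond
  have hπs : Function.Surjective π := fun y => ⟨SemidirectProduct.inr y, by simp [π]⟩
  have hGS : F (G ⧸ S) := F.quot_mem hF S hS hG
  have h1 : F.residual (secSDP R S S hle) ≤ π.ker :=
    F.residual_le_of_quot_mem inferInstance
      (hF.isoClosed _ _ (QuotientGroup.quotientKerEquivOfSurjective π hπs).symm hGS)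
  have h2 : F.residual (secSDP R S S hle) ≤ (SemidirectProduct.rightHom).ker :=
    F.residual_le_of_quot_mem inferInstance
      (hF.isoClosed _ _ (QuotientGroup.quotientKerEquivOfSurjective _
        (SemidirectProduct.rightHom_surjective)).symm hGS)
  have hker : π.ker ⊓ (SemidirectProduct.rightHom :
      secSDP R S S hle →* G ⧸ S).ker = ⊥ := by
    rw [eq_bot_iff]
    rintro x ⟨h1x, h2x⟩
    have hx2 : x.right = 1 := h2x
    have hx1 : incl x.left * (MonoidHom.id _) x.right = 1 := h1x
    rw [hx2, map_one, mul_one] at hx1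
    have hxl : x.left = 1 := incl_inj (hx1.trans (map_one incl).symm)
    rw [Subgroup.mem_bot]
    ext
    · exact hxl
    · exact hx2
  have hres : F.residual (secSDP R S S hle) = ⊥ :=
    le_bot_iff.mp (hker ▸ le_inf h1 h2)
  exact (F.mem_iff_residual_bot hF _).mpr hres

end CentralOfMem
section Transfer

theorem GroupClass.fcentral_map (F : GroupClass) (hF : F.IsFormation)
    {G₁ G₂ : Type} [Group G₁] [Finite G₁] [Group G₂] [Finite G₂]
    (f : G₁ →* G₂) (hf : Function.Surjective f)
    (R S : Subgroup G₁) [hR : R.Normal] [hS : S.Normal]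
    (R₂ S₂ : Subgroup G₂) [hR₂ : R₂.Normal] [hS₂ : S₂.Normal]
    (heR : R.map f = R₂) (heS : S.map f = S₂)
    (h : FCentralSection F R S) : FCentralSection F R₂ S₂ := by
  subst heR heS
  obtain ⟨K, hK, hle, hW⟩ := h
  haveI := hK
  haveI hK₂ : (K.map f).Normal := hK.map f hf
  have hle₂ : K.map f ≤ secCentralizer (R.map f) (S.map f) := by
    rintro _ ⟨k, hk, rfl⟩
    rw [mem_secCentralizer_iff]
    rintro _ ⟨r, hr, rfl⟩
    have h1 : k * r⁻¹ * k⁻¹ * r ∈ S := mem_secCentralizer_iff.mp (hle hk) r hr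
    have h2 : f k * (f r)⁻¹ * (f k)⁻¹ * f r = f (k * r⁻¹ * k⁻¹ * r) := by
      simp [map_mul]
    rw [h2]
    exact Subgroup.mem_map_of_mem f h1
  have hcondN : S.subgroupOf R ≤
      ((S.map f).subgroupOf (R.map f)).comap (f.subgroupMap R) := by
    intro x hx
    rw [Subgroup.mem_subgroupOf] at hx
    rw [Subgroup.mem_comap, Subgroup.mem_subgroupOf]
    exact ⟨x, hx, rfl⟩
  let fN : (R ⧸ S.subgroupOf R) →* ((R.map f) ⧸ (S.map f).subgroupOf (R.map f)) :=
    QuotientGroup.map _ _ (f.subgroupMap R) hcondN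
  have hfN : Function.Surjective fN := by
    intro y
    induction y using QuotientGroup.induction_on with
    | H r₂ =>
      obtain ⟨r, hr, hrr⟩ := r₂.2
      refine ⟨((⟨r, hr⟩ : R) : R ⧸ S.subgroupOf R), ?_⟩
      show ((f.subgroupMap R ⟨r, hr⟩ : (R.map f)) : (R.map f) ⧸ (S.map f).subgroupOf (R.map f)) = _
      exact congrArg _ (Subtype.ext hrr)
  let fG : (G₁ ⧸ K) →* (G₂ ⧸ K.map f) :=
    QuotientGroup.map K (K.map f) f (Subgroup.le_comap_map f K)
  have hfG : Function.Surjective fG := by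
    intro y
    induction y using QuotientGroup.induction_on with
    | H g₂ =>
      obtain ⟨g, rfl⟩ := hf g₂
      exact ⟨((g : G₁) : G₁ ⧸ K), rfl⟩
  have hcompat : ∀ (g : G₁ ⧸ K) (n : R ⧸ S.subgroupOf R),
      fN ((QuotientGroup.lift K (secAction R S) (fun _ hx => hle hx) g) n)
      = (QuotientGroup.lift (K.map f) (secAction (R.map f) (S.map f))
          (fun _ hx => hle₂ hx) (fG g)) (fN n) := by
    intro g n
    induction g using QuotientGroup.induction_on with
    | H g =>
      induction n using QuotientGroup.induction_on with
      | H r =>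
        show fN ((QuotientGroup.lift K (secAction R S) (fun _ hx => hle hx) ((g : G₁ ⧸ K)))
            ((r : R ⧸ S.subgroupOf R))) = _
        show fN (secAction R S g (r : R ⧸ S.subgroupOf R)) = _
        have hfGg : fG ((g : G₁ ⧸ K)) = ((f g : G₂) : G₂ ⧸ K.map f) := rfl
        rw [hfGg]
        show fN (((MulAut.conjNormal g r : R) : R ⧸ S.subgroupOf R)) = _
        have hr2 : secAction (R.map f) (S.map f) (f g)
            ((f.subgroupMap R r : (R.map f)) : (R.map f) ⧸ (S.map f).subgroupOf (R.map f))
            = ((MulAut.conjNormal (f g) (f.subgroupMap R r) : (R.map f)) :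
                (R.map f) ⧸ (S.map f).subgroupOf (R.map f)) := by
          simp only [secAction, MonoidHom.coe_mk, OneHom.coe_mk, QuotientGroup.congr_mk]
        show _ = secAction (R.map f) (S.map f) (f g)
            ((f.subgroupMap R r : (R.map f)) : (R.map f) ⧸ (S.map f).subgroupOf (R.map f))
        rw [hr2]
        show ((f.subgroupMap R (MulAut.conjNormal g r) : (R.map f)) :
            (R.map f) ⧸ (S.map f).subgroupOf (R.map f)) = _
        refine congrArg _ (Subtype.ext ?_)
        show f ((MulAut.conjNormal g r : R) : G₁) = ((MulAut.conjNormal (f g) (f.subgroupMap R r) : (R.map f)) : G₂)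
        have e1 : ((MulAut.conjNormal g r : R) : G₁) = g * (r : G₁) * g⁻¹ := by simp
        have e2 : ((MulAut.conjNormal (f g) (f.subgroupMap R r) : (R.map f)) : G₂)
            = f g * ((f.subgroupMap R r : (R.map f)) : G₂) * (f g)⁻¹ := by simp
        have e3 : ((f.subgroupMap R r : (R.map f)) : G₂) = f (r : G₁) := rfl
        rw [e1, e2, e3]
        simp [map_mul]
  refine ⟨K.map f, hK₂, hle₂, ?_⟩
  exact F.mem_of_surjective hF (sdpMap fN fG hcompat)
    (sdpMap_surjective fN fG hcompat hfN hfG) hW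

end Transfer
section ChiefTransfer

theorem isChiefFactor_comap {G₁ G₂ : Type} [Group G₁] [Group G₂]
    (f : G₁ →* G₂) (hf : Function.Surjective f) {H K : Subgroup G₂}
    (h : IsChiefFactor H K) : IsChiefFactor (H.comap f) (K.comap f) := by
  obtain ⟨hH, hK, hlt, hmin⟩ := h
  refine ⟨hH.comap f, hK.comap f, ?_, ?_⟩
  · rcases lt_iff_le_and_ne.mp hlt with ⟨hle, hne⟩
    exact lt_iff_le_and_ne.mpr ⟨Subgroup.comap_mono hle,
      fun e => hne (Subgroup.comap_injective hf e)⟩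
  · intro L hL h1 h2
    have hkerK : f.ker ≤ K.comap f := by
      intro x hx
      rw [Subgroup.mem_comap]
      rw [MonoidHom.mem_ker] at hx
      rw [hx]
      exact K.one_mem
    have hkerL : f.ker ≤ L := le_trans hkerK h1
    have hmapK : K ≤ L.map f := by
      rw [← Subgroup.map_comap_eq_self_of_surjective hf K]
      exact Subgroup.map_mono h1
    have hmapH : L.map f ≤ H := by
      rw [← Subgroup.map_comap_eq_self_of_surjective hf H]
      exact Subgroup.map_mono h2
    have hLL : (L.map f).comap f = L := by
      rw [Subgroup.comap_map_eq, sup_eq_left.mpr hkerL]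
    rcases hmin (L.map f) (hL.map f hf) hmapK hmapH with hc | hc
    · left; rw [← hLL, hc]
    · right; rw [← hLL, hc]

theorem exists_minimal_normal {G : Type} [Group G] [Finite G] {N : Subgroup G}
    (hN : N.Normal) (hne : N ≠ ⊥) :
    ∃ M : Subgroup G, M.Normal ∧ M ≠ ⊥ ∧ M ≤ N ∧
      (∀ L : Subgroup G, L.Normal → L ≠ ⊥ → L ≤ M → L = M) := by
  classical
  set s : Set (Subgroup G) := {L | L.Normal ∧ L ≠ ⊥ ∧ L ≤ N} with hs
  have hsne : s.Nonempty := ⟨N, hN, hne, le_rfl⟩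
  obtain ⟨M, hM, hmin⟩ : ∃ M ∈ s, ∀ L ∈ s, L ≤ M → M = L := by
    obtain ⟨M, hM⟩ := (Set.toFinite s).exists_minimal hsne
    exact ⟨M, hM.1, fun L hL h => le_antisymm (hM.2 hL h) h⟩
  exact ⟨M, hM.1, hM.2.1, hM.2.2,
    fun L h1 h2 h3 => (hmin L ⟨h1, h2, le_trans h3 hM.2.2⟩ h3).symm⟩

theorem GroupClass.quot_map_mem (F : GroupClass) (hF : F.IsFormation) {G : Type}
    [Group G] [Finite G] (M N : Subgroup G) [hM : M.Normal] [hN : N.Normal]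
    (hNq : (N.map (QuotientGroup.mk' M)).Normal)
    (h : F (G ⧸ N)) : F ((G ⧸ M) ⧸ (N.map (QuotientGroup.mk' M))) := by
  haveI := hNq
  let f : G →* (G ⧸ M) ⧸ (N.map (QuotientGroup.mk' M)) :=
    (QuotientGroup.mk' _).comp (QuotientGroup.mk' M)
  have hcond : ∀ x ∈ N, f x = 1 := fun x hx =>
    (QuotientGroup.eq_one_iff _).mpr (Subgroup.mem_map_of_mem _ hx)
  let g := QuotientGroup.lift N f hcond
  have hg : Function.Surjective g := by
    intro y
    induction y using QuotientGroup.induction_on with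
    | H y₁ =>
      induction y₁ using QuotientGroup.induction_on with
      | H x => exact ⟨((x : G) : G ⧸ N), rfl⟩
  exact F.mem_of_surjective hF g hg h

theorem GroupClass.fhyper_map (F : GroupClass) (hF : F.IsFormation) {G : Type}
    [Group G] [Finite G] {N M : Subgroup G} [hM : M.Normal]
    (hyp : FHypercentralIn F N) (hMN : M ≤ N) :
    FHypercentralIn F (N.map (QuotientGroup.mk' M)) := by
  obtain ⟨hN, hcent⟩ := hyp
  haveI := hN
  have hf : Function.Surjective (QuotientGroup.mk' M) := QuotientGroup.mk'_surjective M
  refine ⟨hN.map _ hf, ?_⟩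
  intro Hq Kq hcf hle
  have hcf' := isChiefFactor_comap (QuotientGroup.mk' M) hf hcf
  haveI := hcf'.1
  haveI := hcf'.2.1
  haveI := hcf.1
  haveI := hcf.2.1
  have hHN : Hq.comap (QuotientGroup.mk' M) ≤ N := by
    calc Hq.comap (QuotientGroup.mk' M)
        ≤ (N.map (QuotientGroup.mk' M)).comap (QuotientGroup.mk' M) := Subgroup.comap_mono hle
      _ = N ⊔ (QuotientGroup.mk' M).ker := Subgroup.comap_map_eq _ N
      _ = N := by rw [QuotientGroup.ker_mk', sup_eq_left.mpr hMN]
  have hc := hcent (Hq.comap (QuotientGroup.mk' M)) (Kq.comap (QuotientGroup.mk' M)) hcf' hHN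
  exact F.fcentral_map hF (QuotientGroup.mk' M) hf _ _ Hq Kq
    (Subgroup.map_comap_eq_self_of_surjective hf Hq)
    (Subgroup.map_comap_eq_self_of_surjective hf Kq) hc

end ChiefTransfer
section QuotOfSDP

theorem GroupClass.quot_of_sdp (F : GroupClass) (hF : F.IsFormation) {G : Type}
    [Group G] [Finite G] (R S K : Subgroup G) [hR : R.Normal] [hS : S.Normal] [hK : K.Normal]
    (hle : K ≤ secCentralizer R S) (hSK : S ≤ K)
    (hW : F (secSDP R S K hle)) : F (G ⧸ K) := by
  have hcond0 : ∀ x ∈ S.subgroupOf R, ((QuotientGroup.mk' K).comp R.subtype) x = 1 := by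
    intro x hx
    rw [Subgroup.mem_subgroupOf] at hx
    exact (QuotientGroup.eq_one_iff _).mpr (hSK hx)
  let f₁ : (R ⧸ S.subgroupOf R) →* (G ⧸ K) :=
    QuotientGroup.lift (S.subgroupOf R) ((QuotientGroup.mk' K).comp R.subtype) hcond0
  have hf₁ : ∀ r : R, f₁ ((r : R ⧸ S.subgroupOf R)) = ((r : G) : G ⧸ K) := fun r => rfl
  have hcond : ∀ g : G ⧸ K,
      f₁.comp ((QuotientGroup.lift K (secAction R S) (fun _ hx => hle hx) g).toMonoidHom)
      = (MulAut.conj ((MonoidHom.id (G ⧸ K)) g)).toMonoidHom.comp f₁ := by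
    intro g
    induction g using QuotientGroup.induction_on with
    | H g =>
      refine MonoidHom.ext fun x => ?_
      induction x using QuotientGroup.induction_on with
      | H r =>
        show f₁ ((QuotientGroup.lift K (secAction R S) (fun _ hx => hle hx) ((g : G ⧸ K)))
          ((r : R ⧸ S.subgroupOf R))) = MulAut.conj ((g : G ⧸ K)) (f₁ ((r : R ⧸ S.subgroupOf R)))
        show f₁ (secAction R S g (r : R ⧸ S.subgroupOf R)) = _
        show f₁ (secAction R S g (r : R ⧸ S.subgroupOf R)) = _
        simp only [secAction, MonoidHom.coe_mk, OneHom.coe_mk, QuotientGroup.congr_mk]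
        rw [hf₁, hf₁, MulAut.conj_apply]
        have : ((MulAut.conjNormal g r : R) : G) = g * (r : G) * g⁻¹ := by simp
        rw [this]
        rfl
  let μ : secSDP R S K hle →* (G ⧸ K) :=
    SemidirectProduct.lift f₁ (MonoidHom.id _) hcond
  have hμs : Function.Surjective μ := fun y => ⟨SemidirectProduct.inr y, by simp [μ]⟩
  exact F.mem_of_surjective hF μ hμs hW

end QuotOfSDP
section MainInduction

theorem GroupClass.mem_of_fhyper_aux (F : GroupClass) (hF : F.IsFormation) (hSat : F.Saturated) :
    ∀ (n : ℕ) (G : Type) [Group G] [Finite G], Nat.card G ≤ n →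
      ∀ (N : Subgroup G) (hyp : FHypercentralIn F N),
      (haveI := hyp.1; F (G ⧸ N)) → F G := by
  intro n
  induction n with
  | zero =>
    intro G _ _ hcard
    have : 0 < Nat.card G := Nat.card_pos
    omega
  | succ n ih =>
    intro G _ _ hcard N hyp hq
    haveI hNn := hyp.1
    rcases eq_or_ne N ⊥ with rfl | hNne
    · exact hF.isoClosed _ _ (QuotientGroup.quotientBot (G := G)) hq
    · obtain ⟨M, hMn, hMne, hMN, hMmin⟩ := exists_minimal_normal hyp.1 hNne
      haveI := hMn
      have hcard2 : Nat.card (G ⧸ M) ≤ n := by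
        have h1 : Nat.card G = Nat.card (G ⧸ M) * Nat.card M :=
          Subgroup.card_eq_card_quotient_mul_card_subgroup M
        have h2 : 1 < Nat.card M := (Subgroup.one_lt_card_iff_ne_bot M).mpr hMne
        have h3 : 0 < Nat.card (G ⧸ M) := Nat.card_pos
        nlinarith
      haveI hNq : (N.map (QuotientGroup.mk' M)).Normal :=
        hNn.map _ (QuotientGroup.mk'_surjective M)
      have hyp2 := F.fhyper_map hF (M := M) hyp hMN
      have hq2 := F.quot_map_mem hF M N hNq hq
      have hGM : F (G ⧸ M) := ih (G ⧸ M) hcard2 _ hyp2 hq2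
      have hresM : F.residual G ≤ M := F.residual_le_of_quot_mem hMn hGM
      rcases eq_or_ne (F.residual G) ⊥ with hres | hres
      · exact (F.mem_iff_residual_bot hF G).mpr hres
      · have hRM : F.residual G = M := hMmin _ (F.residual_normal G) hres hresM
        have hcf : IsChiefFactor M ⊥ := by
          refine ⟨hMn, inferInstance, bot_lt_iff_ne_bot.mpr hMne, ?_⟩
          intro L hL _ hLM
          by_cases hLb : L = ⊥
          · exact Or.inl hLb
          · exact Or.inr (hMmin L hL hLb hLM)
        have hcent := hyp.2 M ⊥ hcf hMN
        obtain ⟨K, hK, hle, hW⟩ := hcent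
        haveI := hK
        have hGK : F (G ⧸ K) := F.quot_of_sdp hF M ⊥ K hle bot_le hW
        have hMK : M ≤ K := hRM.symm.trans_le (F.residual_le_of_quot_mem hK hGK)
        have hMC : M ≤ secCentralizer M ⊥ := le_trans hMK hle
        have hMcomm : ∀ x y : G, x ∈ M → y ∈ M → x * y = y * x := by
          intro x y hx hy
          have h0 := mem_secCentralizer_iff.mp (hMC hx) y hy
          rw [Subgroup.mem_bot] at h0
          have h2 : x * y⁻¹ * x⁻¹ = y⁻¹ := mul_eq_one_iff_eq_inv.mp h0
          have h3 : x * y * x⁻¹ = y := by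
            have h4 := congrArg Inv.inv h2
            simpa [mul_assoc] using h4
          calc x * y = x * y * x⁻¹ * x := by group
            _ = y * x := by rw [h3]
        by_cases hMFr : M ≤ frattini G
        · exact hSat G (by rw [hRM]; exact hMFr)
        · obtain ⟨U, hU, hMU⟩ : ∃ U : Subgroup G, IsCoatom U ∧ ¬ M ≤ U := by
            by_contra hcon
            push_neg at hcon
            refine hMFr ?_
            show M ≤ Order.radical (Subgroup G)
            rw [Order.radical]
            exact le_iInf₂ fun U hU => hcon U hU
          have hsup : M ⊔ U = ⊤ := by
            refine hU.2 _ (lt_of_le_of_ne le_sup_right fun e => hMU ?_)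
            rw [e]
            exact le_sup_left
          have hMUbot : M ⊓ U = ⊥ := by
            have hnorm : (M ⊓ U).Normal := by
              rw [← Subgroup.normalizer_eq_top_iff]
              rw [eq_top_iff, ← hsup]
              refine sup_le ?_ ?_
              · intro m hm
                rw [Subgroup.mem_normalizer_iff]
                intro h
                constructor
                · rintro ⟨h1, h2⟩
                  have : m * h * m⁻¹ = h := by
                    rw [hMcomm m h hm h1]; group
                  rw [this]; exact ⟨h1, h2⟩
                · rintro ⟨h1, h2⟩
                  have hmem : m * h * m⁻¹ ∈ M := h1
                  have hz := hMcomm m (m * h * m⁻¹) hm hmem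
                  have heq : m * h * m⁻¹ = h := by
                    have h6 : m * (m * h * m⁻¹) = m * h := by rw [hz]; group
                    exact mul_left_cancel h6
                  rw [← heq]; exact ⟨h1, h2⟩
              · intro u hu
                rw [Subgroup.mem_normalizer_iff]
                intro h
                constructor
                · rintro ⟨h1, h2⟩
                  exact ⟨hMn.conj_mem h h1 u, U.mul_mem (U.mul_mem hu h2) (U.inv_mem hu)⟩
                · rintro ⟨h1, h2⟩
                  have hM' : u⁻¹ * (u * h * u⁻¹) * u⁻¹⁻¹ ∈ M := hMn.conj_mem _ h1 u⁻¹
                  have e : u⁻¹ * (u * h * u⁻¹) * u⁻¹⁻¹ = h := by group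
                  constructor
                  · rw [← e]; exact hM'
                  · have e2 : h = u⁻¹ * (u * h * u⁻¹) * u := by group
                    rw [e2]
                    exact U.mul_mem (U.mul_mem (U.inv_mem hu) h2) hu
            by_contra hbot
            have := hMmin (M ⊓ U) hnorm hbot inf_le_left
            exact hMU (this ▸ inf_le_right)
          have hcompl : Subgroup.IsComplement' M U := by
            refine Subgroup.isComplement'_of_disjoint_and_mul_eq_univ (disjoint_iff.mpr hMUbot) ?_
            rw [← Subgroup.normal_mul, hsup]
            rfl
          have hleC : secCentralizer M ⊥ ≤ secCentralizer M ⊥ := le_rfl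
          have hW' : F (secSDP M ⊥ (secCentralizer M ⊥) hleC) := by
            have hcm : K ≤ (secCentralizer M ⊥).comap (MonoidHom.id G) := hle
            have hcompat : ∀ (g : G ⧸ K) (x : M ⧸ (⊥ : Subgroup G).subgroupOf M),
                (MonoidHom.id _) ((QuotientGroup.lift K (secAction M ⊥) (fun _ hx => hle hx) g) x)
                = (QuotientGroup.lift (secCentralizer M ⊥) (secAction M ⊥) (fun _ hx => hleC hx)
                    ((QuotientGroup.map K (secCentralizer M ⊥) (MonoidHom.id G) hcm) g))
                  ((MonoidHom.id _) x) := by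
              intro g x
              induction g using QuotientGroup.induction_on with
              | H g => rfl
            refine F.mem_of_surjective hF (sdpMap _ _ hcompat)
              (sdpMap_surjective _ _ hcompat (fun x => ⟨x, rfl⟩) ?_) hW
            intro y
            induction y using QuotientGroup.induction_on with
            | H g => exact ⟨((g : G) : G ⧸ K), rfl⟩
          have hce : Subgroup.IsComplement (M : Set G) (U : Set G) :=
            Subgroup.isComplement'_def.mp hcompl
          let prj : G → M := fun g => ⟨((hce.equiv g).1 : G), (hce.equiv g).1.2⟩
          have key : ∀ (m : M) (u : U),
              hce.equiv ((m : G) * (u : G)) = (⟨(m : G), m.2⟩, ⟨(u : G), u.2⟩) := by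
            intro m u
            rw [Equiv.apply_eq_iff_eq_symm_apply]
            exact (Subgroup.IsComplement.equiv_symm_apply hce (⟨(m : G), m.2⟩, ⟨(u : G), u.2⟩)).symm
          have hprj : ∀ (m : M) (u : U), prj ((m : G) * (u : G)) = m := by
            intro m u
            show (⟨((hce.equiv ((m : G) * (u : G))).1 : G), _⟩ : M) = m
            rw [key m u]
          have hdec : ∀ g : G, ∃ (m : M) (u : U), g = (m : G) * (u : G) := by
            intro g
            exact ⟨⟨((hce.equiv g).1 : G), (hce.equiv g).1.2⟩,
              ⟨((hce.equiv g).2 : G), (hce.equiv g).2.2⟩,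
              (hce.equiv_fst_mul_equiv_snd g).symm⟩
          have hMult : ∀ g g' : G, prj (g * g') = prj g * MulAut.conjNormal g (prj g') := by
            intro g g'
            obtain ⟨mg, ug, hg⟩ := hdec g
            obtain ⟨mg', ug', hg'⟩ := hdec g'
            have hpg : prj g = mg := by rw [hg]; exact hprj mg ug
            have hpg' : prj g' = mg' := by rw [hg']; exact hprj mg' ug'
            have hmemz : g * (mg' : G) * g⁻¹ ∈ M := hMn.conj_mem _ mg'.2 g
            have hzM : (ug : G) * (mg' : G) * (ug : G)⁻¹ ∈ M := hMn.conj_mem _ mg'.2 ug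
            have hcz := hMcomm (mg : G) ((ug : G) * (mg' : G) * (ug : G)⁻¹) mg.2 hzM
            have hkey1 : (mg : G) * ((ug : G) * (mg' : G) * (ug : G)⁻¹) * (mg : G)⁻¹
                = (ug : G) * (mg' : G) * (ug : G)⁻¹ := by
              rw [hcz]; group
            have hprod : g * g' = ((mg * ⟨g * (mg' : G) * g⁻¹, hmemz⟩ : M) : G)
                * ((ug * ug' : U) : G) := by
              have e0 : ((mg * ⟨g * (mg' : G) * g⁻¹, hmemz⟩ : M) : G)
                  = (mg : G) * (g * (mg' : G) * g⁻¹) := rfl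
              have e1 : ((ug * ug' : U) : G) = (ug : G) * (ug' : G) := rfl
              rw [e0, e1]
              rw [hg, hg']
              calc ((mg : G) * ug) * ((mg' : G) * ug')
                  = (mg : G) * ((mg : G) * ((ug : G) * (mg' : G) * (ug : G)⁻¹) * (mg : G)⁻¹)
                    * ((ug : G) * ug') := by rw [hkey1]; group
                _ = (mg : G) * (((mg : G) * ug) * (mg' : G) * (((mg : G) * ug))⁻¹)
                    * ((ug : G) * ug') := by group
            have hM2 : prj (g * g') = mg * ⟨g * (mg' : G) * g⁻¹, hmemz⟩ := by
              rw [hprod]; exact hprj _ _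
            have hconj : MulAut.conjNormal g (prj g') = (⟨g * (mg' : G) * g⁻¹, hmemz⟩ : M) := by
              rw [hpg']
              exact Subtype.ext (by simp)
            rw [hM2, hpg, hconj]
          let Ψ : G →* secSDP M ⊥ (secCentralizer M ⊥) hleC := {
            toFun := fun g => ⟨((prj g : M) : M ⧸ (⊥ : Subgroup G).subgroupOf M),
              ((g : G) : G ⧸ secCentralizer M ⊥)⟩
            map_one' := by
              have h1 : prj 1 = 1 := by simpa using hprj 1 1
              refine SemidirectProduct.ext ?_ ?_
              · show ((prj 1 : M) : M ⧸ (⊥ : Subgroup G).subgroupOf M) = 1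
                rw [h1]; rfl
              · rfl
            map_mul' := fun g g' => by
              refine SemidirectProduct.ext ?_ ?_
              · show ((prj (g * g') : M) : M ⧸ (⊥ : Subgroup G).subgroupOf M) = _
                rw [hMult g g']
                have hact : (QuotientGroup.lift (secCentralizer M ⊥) (secAction M ⊥)
                      (fun _ hx => hleC hx) ((g : G ⧸ secCentralizer M ⊥)))
                      ((prj g' : M) : M ⧸ (⊥ : Subgroup G).subgroupOf M)
                    = ((MulAut.conjNormal g (prj g') : M) : M ⧸ (⊥ : Subgroup G).subgroupOf M) := by
                  show secAction M ⊥ g ((prj g' : M) : M ⧸ (⊥ : Subgroup G).subgroupOf M) = _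
                  simp only [secAction, MonoidHom.coe_mk, OneHom.coe_mk, QuotientGroup.congr_mk]
                show _ = ((prj g : M) : M ⧸ (⊥ : Subgroup G).subgroupOf M)
                  * (QuotientGroup.lift (secCentralizer M ⊥) (secAction M ⊥)
                      (fun _ hx => hleC hx) ((g : G ⧸ secCentralizer M ⊥)))
                    ((prj g' : M) : M ⧸ (⊥ : Subgroup G).subgroupOf M)
                rw [hact, ← QuotientGroup.mk_mul]
              · rfl
          }
          have hΨs : Function.Surjective Ψ := by
            rintro ⟨x, c⟩
            induction x using QuotientGroup.induction_on with
            | H m =>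
              induction c using QuotientGroup.induction_on with
              | H g =>
                obtain ⟨mg, ug, hg⟩ := hdec g
                refine ⟨(m : G) * (ug : G), ?_⟩
                refine SemidirectProduct.ext ?_ ?_
                · show ((prj ((m : G) * (ug : G)) : M) : M ⧸ (⊥ : Subgroup G).subgroupOf M) = _
                  rw [hprj m ug]
                · show (((m : G) * (ug : G) : G) : G ⧸ secCentralizer M ⊥) = (g : G ⧸ secCentralizer M ⊥)
                  rw [QuotientGroup.eq]
                  have e : ((m : G) * (ug : G))⁻¹ * g
                      = (ug : G)⁻¹ * ((m : G)⁻¹ * (mg : G)) * ((ug : G)⁻¹)⁻¹ := by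
                    rw [hg]; group
                  rw [e]
                  have hmem : (m : G)⁻¹ * (mg : G) ∈ secCentralizer M ⊥ :=
                    hMC (M.mul_mem (M.inv_mem m.2) mg.2)
                  exact (secCentralizer.normal M ⊥).conj_mem _ hmem ((ug : G)⁻¹)
          have hGKer : F (G ⧸ Ψ.ker) :=
            hF.isoClosed _ _ (QuotientGroup.quotientKerEquivOfSurjective Ψ hΨs).symm hW'
          have hMker : M ≤ Ψ.ker :=
            hRM.symm.trans_le (F.residual_le_of_quot_mem (MonoidHom.normal_ker Ψ) hGKer)
          exfalso
          obtain ⟨⟨m₀, hm₀⟩, hm₀ne⟩ := Subgroup.ne_bot_iff_exists_ne_one.mp hMne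
          have hΨm : Ψ m₀ = 1 := hMker hm₀
          have hleft : ((prj m₀ : M) : M ⧸ (⊥ : Subgroup G).subgroupOf M) = 1 :=
            congrArg SemidirectProduct.left hΨm
          have hpm : prj m₀ = ⟨m₀, hm₀⟩ := by
            simpa using hprj ⟨m₀, hm₀⟩ 1
          rw [hpm] at hleft
          have : (⟨m₀, hm₀⟩ : M) ∈ (⊥ : Subgroup G).subgroupOf M :=
            (QuotientGroup.eq_one_iff _).mp hleft
          rw [Subgroup.mem_subgroupOf, Subgroup.mem_bot] at this
          exact hm₀ne (Subtype.ext this)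

end MainInduction

/-- **Lemma 5.** For a saturated formation `𝔉` and a finite group `G`, the following are
equivalent: (i) `G ∈ 𝔉`; (ii) every chief factor of `G` is `𝔉`-central in `G`;
(iii) `G` has a normal `𝔉`-hypercentral subgroup `N` with `G/N ∈ 𝔉`. -/
theorem mem_iff_chiefFactors_FCentral_iff_exists_FHypercentral
    (F : GroupClass) (hF : F.IsFormation) (hSat : F.Saturated)
    (G : Type) [Group G] [Finite G] :
    (F G ↔ ∀ H K : Subgroup G, ∀ hcf : IsChiefFactor H K,
        @FCentralSection F G _ _ H K hcf.1 hcf.2.1) ∧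
      (F G ↔ ∃ N : Subgroup G, ∃ h : FHypercentralIn F N,
        haveI := h.1
        F (G ⧸ N)) := by
  have hii : F G → (∀ H K : Subgroup G, ∀ hcf : IsChiefFactor H K,
      @FCentralSection F G _ _ H K hcf.1 hcf.2.1) := by
    intro hG H K hcf
    haveI := hcf.1
    haveI := hcf.2.1
    exact F.central_of_mem hF hG H K
  have hiii_of_ii : (∀ H K : Subgroup G, ∀ hcf : IsChiefFactor H K,
      @FCentralSection F G _ _ H K hcf.1 hcf.2.1) →
      (∃ N : Subgroup G, ∃ h : FHypercentralIn F N, haveI := h.1; F (G ⧸ N)) := by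
    intro h
    refine ⟨⊤, ⟨inferInstance, fun H K hcf _ => h H K hcf⟩, ?_⟩
    exact hF.quot_residual_mem G ⊤ inferInstance le_top
  have hi_of_iii : (∃ N : Subgroup G, ∃ h : FHypercentralIn F N,
      haveI := h.1; F (G ⧸ N)) → F G := by
    rintro ⟨N, hyp, hq⟩
    exact F.mem_of_fhyper_aux hF hSat (Nat.card G) G le_rfl N hyp hq
  exact ⟨⟨hii, fun h => hi_of_iii (hiii_of_ii h)⟩,
    ⟨fun hG => hiii_of_ii (hii hG), hi_of_iii⟩⟩
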